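/- Let q_x, q_y ∈ ℝ and consider the linear function 𝐪(x,y) = q_x x + q_y y on ℝ². For an axis-aligned rectangle T = I × J, let e_{1,T}(𝐪)_p := inf_{c∈ℝ} ‖𝐪 − c‖_{L^p(T)}. Then for 1 ≤ p < ∞, the infimum over all axis-aligned rectangles T = I × J of unit area (|I|·|J| = 1) of e_{1,T}(𝐪)_p equals C_p √(|q_x q_y|), where C_p = (2/((p+1)(p+2)))^{1/p}; for p = ∞ the infimum equals √(|q_x q_y|). Moreover, when q_x q_y ≠ 0 the infimum is attained exactly by rectangles whose side lengths satisfy |I|/|J| = |q_y|/|q_x|, i.e. |I| = √(|q_y|/|q_x|) and |J| = √(|q_x|/|q_y|), and this optimal aspect ratio is independent of p. -/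

import Mathlib

open Set MeasureTheory ENNReal

/-- The axis-aligned rectangle `[a, a+w] × [b, b+h]`. -/
def rect (a b w h : ℝ) : Set (ℝ × ℝ) := Set.Icc a (a + w) ×ˢ Set.Icc b (b + h)

/-- Best-constant `L^p` approximation error `e_{1,T}(g)_p = inf_c ‖g - c‖_{L^p(T)}`. -/
noncomputable def constErr (p : ℝ≥0∞) (g : ℝ × ℝ → ℝ) (T : Set (ℝ × ℝ)) : ℝ≥0∞ :=
  ⨅ c : ℝ, eLpNorm (fun z => g z - c) p (volume.restrict T)

/-- The shape function `K_p(𝐪)`: the infimum over all unit-area axis-aligned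
rectangles of the best-constant `L^p` error of `𝐪(x,y) = q_x x + q_y y`. -/
noncomputable def shapeK (p : ℝ≥0∞) (qx qy : ℝ) : ℝ≥0∞ :=
  sInf { e : ℝ≥0∞ | ∃ a b w h : ℝ, 0 < w ∧ 0 < h ∧ w * h = 1 ∧
    e = constErr p (fun z => qx * z.1 + qy * z.2) (rect a b w h) }

/-! ### Auxiliary derivative lemmas -/

lemma hasDerivAt_absPow_mul {r : ℝ} (hr : 1 ≤ r) (t : ℝ) :
    HasDerivAt (fun s : ℝ => |s| ^ r * s) ((r + 1) * |t| ^ r) t := by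
  rcases lt_trichotomy t 0 with ht | ht | ht
  · have hneg : HasDerivAt (fun s : ℝ => (-s) ^ r) (-(r * (-t) ^ (r - 1))) t := by
      have := (Real.hasDerivAt_rpow_const (x := -t) (p := r) (Or.inl (by linarith))).comp t
        (hasDerivAt_neg t)
      simpa [mul_comm, Function.comp_def] using this
    have h1 := hneg.mul (hasDerivAt_id t)
    have h2 : HasDerivAt (fun s : ℝ => |s| ^ r * s) (-(r * (-t) ^ (r - 1)) * t + (-t) ^ r * 1) t := by
      apply h1.congr_of_eventuallyEq
      filter_upwards [Filter.Tendsto.eventually_lt_const ht (Filter.tendsto_id (x := nhds t))] with s hs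
      simp only [id_eq, Pi.mul_apply] at hs ⊢; rw [abs_of_neg hs]
    convert h2 using 1
    have h3 : (-t) ^ (r - 1) * (-t) = (-t) ^ r := by
      rw [← Real.rpow_add_one (by linarith : (-t) ≠ 0)]; ring_nf
    rw [abs_of_neg ht]
    nlinarith [h3]
  · subst ht
    have h0 : |(0:ℝ)| ^ r = 0 := by
      simp [Real.zero_rpow (by linarith : r ≠ 0)]
    rw [h0, mul_zero, hasDerivAt_iff_tendsto_slope]
    have hb : ∀ s : ℝ, s ≠ 0 → ‖slope (fun s : ℝ => |s| ^ r * s) 0 s‖ ≤ |s| ^ r := by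
      intro s hs
      rw [slope_def_field]
      simp only [abs_zero, h0, zero_mul, mul_zero, sub_zero]
      rw [mul_div_assoc, div_self hs, mul_one]
      rw [Real.norm_eq_abs, abs_of_nonneg (Real.rpow_nonneg (abs_nonneg s) r)]
    have hlim : Filter.Tendsto (fun s : ℝ => |s| ^ r) (nhds 0) (nhds 0) := by
      have habs : Filter.Tendsto (fun s : ℝ => |s|) (nhds 0) (nhds 0) := by
        simpa using continuous_abs.tendsto (0:ℝ)
      have hc : Filter.Tendsto (fun x : ℝ => x ^ r) (nhds 0) (nhds 0) := by
        have := (Real.continuousAt_rpow_const 0 r (Or.inr (by linarith)))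
        simpa [Real.zero_rpow (by linarith : r ≠ 0)] using this.tendsto
      exact hc.comp habs
    apply squeeze_zero_norm' _ (hlim.mono_left nhdsWithin_le_nhds)
    filter_upwards [self_mem_nhdsWithin] with s hs
    exact hb s hs
  · have hpos : HasDerivAt (fun s : ℝ => s ^ r) (r * t ^ (r - 1)) t :=
      Real.hasDerivAt_rpow_const (Or.inl (ne_of_gt ht))
    have h1 := hpos.mul (hasDerivAt_id t)
    have h2 : HasDerivAt (fun s : ℝ => |s| ^ r * s) (r * t ^ (r - 1) * t + t ^ r * 1) t := by
      apply h1.congr_of_eventuallyEq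
      filter_upwards [Filter.Tendsto.eventually_const_lt ht (Filter.tendsto_id (x := nhds t))] with s hs
      simp only [id_eq, Pi.mul_apply] at hs ⊢; rw [abs_of_pos hs]
    convert h2 using 1
    have h3 : t ^ (r - 1) * t = t ^ r := by
      rw [← Real.rpow_add_one (by linarith : t ≠ 0)]; ring_nf
    rw [abs_of_pos ht]
    nlinarith [h3]

lemma hasDerivAt_absPow {r : ℝ} (hr : 1 ≤ r) (t : ℝ) :
    HasDerivAt (fun s : ℝ => |s| ^ (r + 2)) ((r + 2) * (|t| ^ r * t)) t := by
  have := hasDerivAt_abs_rpow t (p := r + 2) (by linarith)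
  have h2 : r + 2 - 2 = r := by ring
  rw [h2] at this
  convert this using 1
  ring

/-! ### The double integral -/

lemma cont_lin (qx qy : ℝ) : Continuous (fun z : ℝ × ℝ => qx * z.1 + qy * z.2) :=
  (continuous_const.mul continuous_fst).add (continuous_const.mul continuous_snd)

lemma cont_integrand {pr : ℝ} (hpr : 1 ≤ pr) (qx qy : ℝ) :
    Continuous (fun z : ℝ × ℝ => |qx * z.1 + qy * z.2| ^ pr) := by
  apply Continuous.rpow_const
  · exact ((continuous_const.mul continuous_fst).add (continuous_const.mul continuous_snd)).abs
  · exact fun z => Or.inr (by linarith)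

lemma inner_integral {pr qx qy h : ℝ} (hpr : 1 ≤ pr) (hqy : qy ≠ 0) (hh : 0 < h) (x : ℝ) :
    ∫ y in Icc (-(h/2)) (h/2), |qx * x + qy * y| ^ pr =
      (|qx * x + qy * (h/2)| ^ pr * (qx * x + qy * (h/2))
        - |qx * x + qy * (-(h/2))| ^ pr * (qx * x + qy * (-(h/2)))) / (qy * (pr + 1)) := by
  rw [integral_Icc_eq_integral_Ioc, ← intervalIntegral.integral_of_le (by linarith : -(h/2) ≤ h/2)]
  rw [intervalIntegral.integral_eq_sub_of_hasDerivAt (f := fun y =>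
      |qx * x + qy * y| ^ pr * (qx * x + qy * y) / (qy * (pr + 1)))]
  · rw [div_sub_div_same]
  · intro y _
    have hlin : HasDerivAt (fun y : ℝ => qx * x + qy * y) qy y := by
      simpa using ((hasDerivAt_id y).const_mul qy).const_add (qx * x)
    have := ((hasDerivAt_absPow_mul hpr (qx * x + qy * y)).comp y hlin).div_const (qy * (pr + 1))
    refine this.congr_deriv ?_
    field_simp
  · exact (Continuous.intervalIntegrable (by
      have := cont_integrand hpr qx qy
      exact this.comp (continuous_const.prodMk continuous_id)) _ _)

lemma outer_integral {pr qx qy w h : ℝ} (hpr : 1 ≤ pr) (hqx : qx ≠ 0) (hqy : qy ≠ 0)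
    (hw : 0 < w) (hh : 0 < h) :
    ∫ x in Icc (-(w/2)) (w/2),
      (|qx * x + qy * (h/2)| ^ pr * (qx * x + qy * (h/2))
        - |qx * x + qy * (-(h/2))| ^ pr * (qx * x + qy * (-(h/2)))) / (qy * (pr + 1)) =
    2 * (|(qx * w + qy * h)/2| ^ (pr + 2) - |(qx * w - qy * h)/2| ^ (pr + 2)) /
      (qx * qy * (pr + 1) * (pr + 2)) := by
  rw [integral_Icc_eq_integral_Ioc, ← intervalIntegral.integral_of_le (by linarith : -(w/2) ≤ w/2)]
  rw [intervalIntegral.integral_eq_sub_of_hasDerivAt (f := fun x =>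
      (|qx * x + qy * (h/2)| ^ (pr + 2) - |qx * x + qy * (-(h/2))| ^ (pr + 2)) /
        (qx * qy * (pr + 1) * (pr + 2)))]
  · rw [div_sub_div_same]
    have e1 : qx * (w/2) + qy * (h/2) = (qx * w + qy * h)/2 := by ring
    have e2 : qx * (w/2) + qy * (-(h/2)) = (qx * w - qy * h)/2 := by ring
    have e3 : qx * (-(w/2)) + qy * (h/2) = -((qx * w - qy * h)/2) := by ring
    have e4 : qx * (-(w/2)) + qy * (-(h/2)) = -((qx * w + qy * h)/2) := by ring
    rw [e1, e2, e3, e4, abs_neg, abs_neg]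
    ring
  · intro x _
    have hlin1 : HasDerivAt (fun x : ℝ => qx * x + qy * (h/2)) qx x := by
      simpa using ((hasDerivAt_id x).const_mul qx).add_const (qy * (h/2))
    have hlin2 : HasDerivAt (fun x : ℝ => qx * x + qy * (-(h/2))) qx x := by
      simpa using ((hasDerivAt_id x).const_mul qx).add_const (qy * (-(h/2)))
    have hd1 := (hasDerivAt_absPow hpr (qx * x + qy * (h/2))).comp x hlin1
    have hd2 := (hasDerivAt_absPow hpr (qx * x + qy * (-(h/2)))).comp x hlin2
    have := (hd1.sub hd2).div_const (qx * qy * (pr + 1) * (pr + 2))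
    refine this.congr_deriv ?_
    field_simp
  · apply Continuous.intervalIntegrable
    apply Continuous.div_const
    apply Continuous.sub
    · exact ((cont_integrand hpr qx qy).comp (continuous_id.prodMk continuous_const)).mul
        ((continuous_const.mul continuous_id).add continuous_const)
    · exact ((cont_integrand hpr qx qy).comp (continuous_id.prodMk continuous_const)).mul
        ((continuous_const.mul continuous_id).add continuous_const)

lemma double_integral {pr qx qy w h : ℝ} (hpr : 1 ≤ pr) (hqx : qx ≠ 0) (hqy : qy ≠ 0)
    (hw : 0 < w) (hh : 0 < h) :
    ∫ z in (Icc (-(w/2)) (w/2) ×ˢ Icc (-(h/2)) (h/2)), |qx * z.1 + qy * z.2| ^ pr =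
    2 * (|(qx * w + qy * h)/2| ^ (pr + 2) - |(qx * w - qy * h)/2| ^ (pr + 2)) /
      (qx * qy * (pr + 1) * (pr + 2)) := by
  have hint : IntegrableOn (fun z : ℝ × ℝ => |qx * z.1 + qy * z.2| ^ pr)
      (Icc (-(w/2)) (w/2) ×ˢ Icc (-(h/2)) (h/2)) volume :=
    (cont_integrand hpr qx qy).continuousOn.integrableOn_compact
      (isCompact_Icc.prod isCompact_Icc)
  rw [show (volume : Measure (ℝ × ℝ)) = (volume : Measure ℝ).prod volume from Measure.volume_eq_prod ℝ ℝ,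
    ← Measure.prod_restrict]
  rw [MeasureTheory.integral_prod _ (by
    rwa [Measure.prod_restrict, ← Measure.volume_eq_prod])]
  calc ∫ x in Icc (-(w/2)) (w/2), ∫ y in Icc (-(h/2)) (h/2), |qx * x + qy * y| ^ pr
      = ∫ x in Icc (-(w/2)) (w/2),
        (|qx * x + qy * (h/2)| ^ pr * (qx * x + qy * (h/2))
          - |qx * x + qy * (-(h/2))| ^ pr * (qx * x + qy * (-(h/2)))) / (qy * (pr + 1)) := by
        apply integral_congr_ae
        filter_upwards with x
        exact inner_integral hpr hqy hh x
    _ = _ := outer_integral hpr hqx hqy hw hh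

/-! ### Reduction to the centered rectangle, optimal constant -/

def cQ (w h : ℝ) : Set (ℝ × ℝ) := Icc (-(w/2)) (w/2) ×ˢ Icc (-(h/2)) (h/2)

lemma measurableSet_rect (a b w h : ℝ) : MeasurableSet (rect a b w h) :=
  measurableSet_Icc.prod measurableSet_Icc

lemma measurableSet_cQ (w h : ℝ) : MeasurableSet (cQ w h) :=
  measurableSet_Icc.prod measurableSet_Icc

lemma rect_preimage_translate (a b w h : ℝ) :
    (fun z : ℝ × ℝ => z + (a + w/2, b + h/2)) ⁻¹' rect a b w h = cQ w h := by
  ext z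
  simp only [rect, cQ, Set.mem_preimage, Set.mem_prod, Set.mem_Icc, Prod.fst_add, Prod.snd_add]
  constructor
  · rintro ⟨⟨h1, h2⟩, h3, h4⟩; exact ⟨⟨by linarith, by linarith⟩, by linarith, by linarith⟩
  · rintro ⟨⟨h1, h2⟩, h3, h4⟩; exact ⟨⟨by linarith, by linarith⟩, by linarith, by linarith⟩

lemma constErr_eq_centered (p : ℝ≥0∞) (qx qy a b w h : ℝ) :
    constErr p (fun z => qx * z.1 + qy * z.2) (rect a b w h) =
      ⨅ c : ℝ, eLpNorm (fun z => qx * z.1 + qy * z.2 - c) p (volume.restrict (cQ w h)) := by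
  set v : ℝ × ℝ := (a + w/2, b + h/2) with hv
  have hmp : MeasurePreserving (fun z : ℝ × ℝ => z + v) volume volume :=
    measurePreserving_add_right volume v
  have hres : MeasurePreserving (fun z : ℝ × ℝ => z + v)
      (volume.restrict (cQ w h)) (volume.restrict (rect a b w h)) := by
    have := hmp.restrict_preimage (measurableSet_rect a b w h)
    rwa [rect_preimage_translate a b w h] at this
  have key : ∀ c : ℝ, eLpNorm (fun z : ℝ × ℝ => qx * z.1 + qy * z.2 - c) p
      (volume.restrict (rect a b w h)) =
      eLpNorm (fun z : ℝ × ℝ => qx * z.1 + qy * z.2 - (c - (qx * v.1 + qy * v.2))) p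
      (volume.restrict (cQ w h)) := by
    intro c
    rw [← eLpNorm_comp_measurePreserving (g := fun z : ℝ × ℝ => qx * z.1 + qy * z.2 - c)
      (((cont_lin qx qy).sub continuous_const).aestronglyMeasurable) hres]
    congr 1
    funext z
    simp only [Function.comp_apply, Prod.fst_add, Prod.snd_add]
    ring
  apply le_antisymm
  · refine le_iInf fun c => ?_
    rw [show c = (c + (qx * v.1 + qy * v.2)) - (qx * v.1 + qy * v.2) by ring] at *
    exact iInf_le_of_le (c + (qx * v.1 + qy * v.2)) (le_of_eq (key _))
  · refine le_iInf fun c => ?_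
    exact iInf_le_of_le (c - (qx * v.1 + qy * v.2)) (le_of_eq (key c).symm)

lemma iInf_centered {p : ℝ≥0∞} (hp : 1 ≤ p) (qx qy w h : ℝ) :
    ⨅ c : ℝ, eLpNorm (fun z : ℝ × ℝ => qx * z.1 + qy * z.2 - c) p (volume.restrict (cQ w h)) =
      eLpNorm (fun z : ℝ × ℝ => qx * z.1 + qy * z.2) p (volume.restrict (cQ w h)) := by
  set μ := volume.restrict (cQ w h)
  apply le_antisymm
  · have := iInf_le (fun c : ℝ => eLpNorm (fun z : ℝ × ℝ => qx * z.1 + qy * z.2 - c) p μ) 0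
    simpa using this
  · refine le_iInf fun c => ?_
    set g : ℝ × ℝ → ℝ := fun z => qx * z.1 + qy * z.2 - c with hg
    set g' : ℝ × ℝ → ℝ := fun z => -(qx * z.1 + qy * z.2) - c with hg'
    have hnegQ : (fun z : ℝ × ℝ => -z) ⁻¹' (cQ w h) = cQ w h := by
      ext z
      simp only [cQ, Set.mem_preimage, Set.mem_prod, Set.mem_Icc, Prod.fst_neg, Prod.snd_neg]
      constructor
      · rintro ⟨⟨h1, h2⟩, h3, h4⟩; exact ⟨⟨by linarith, by linarith⟩, by linarith, by linarith⟩
      · rintro ⟨⟨h1, h2⟩, h3, h4⟩; exact ⟨⟨by linarith, by linarith⟩, by linarith, by linarith⟩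
    have hres : MeasurePreserving (fun z : ℝ × ℝ => -z) μ μ := by
      have := (Measure.measurePreserving_neg (volume : Measure (ℝ × ℝ))).restrict_preimage
        (measurableSet_cQ w h)
      rwa [hnegQ] at this
    have hgm : AEStronglyMeasurable g μ :=
      ((cont_lin qx qy).sub continuous_const).aestronglyMeasurable
    have hg'm : AEStronglyMeasurable g' μ :=
      (((cont_lin qx qy).neg).sub continuous_const).aestronglyMeasurable
    have h1 : eLpNorm g' p μ = eLpNorm g p μ := by
      rw [← eLpNorm_comp_measurePreserving hgm hres]
      congr 1
      funext z
      simp only [hg, hg', Function.comp_apply, Prod.fst_neg, Prod.snd_neg]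
      ring
    have hsplit : (fun z : ℝ × ℝ => qx * z.1 + qy * z.2) = (2⁻¹ : ℝ) • (g - g') := by
      funext z
      simp only [Pi.smul_apply, Pi.sub_apply, hg, hg', smul_eq_mul]
      ring
    calc eLpNorm (fun z : ℝ × ℝ => qx * z.1 + qy * z.2) p μ
        = (‖(2⁻¹ : ℝ)‖₊ : ℝ≥0∞) * eLpNorm (g - g') p μ := by
          rw [hsplit, eLpNorm_const_smul, enorm_eq_nnnorm]
      _ ≤ (‖(2⁻¹ : ℝ)‖₊ : ℝ≥0∞) * (eLpNorm g p μ + eLpNorm g' p μ) := by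
          gcongr
          exact eLpNorm_sub_le hgm hg'm hp
      _ = eLpNorm g p μ := by
          rw [h1, ← two_mul, ← mul_assoc]
          have : (‖(2⁻¹ : ℝ)‖₊ : ℝ≥0∞) = 2⁻¹ := by
            simp [nnnorm_inv]
          rw [this, ENNReal.inv_mul_cancel (by norm_num) (by norm_num), one_mul]

/-! ### value of the `L^p` norm on the centered rectangle -/

lemma toReal_one_le {p : ℝ≥0∞} (hp1 : 1 ≤ p) (hpt : p ≠ ⊤) : 1 ≤ p.toReal := by
  have := ENNReal.toReal_mono hpt hp1
  simpa using this

lemma eLpNorm_cQ {p : ℝ≥0∞} {qx qy w h : ℝ} (hp1 : 1 ≤ p) (hpt : p ≠ ⊤) (hqx : qx ≠ 0)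
    (hqy : qy ≠ 0) (hw : 0 < w) (hh : 0 < h) :
    eLpNorm (fun z : ℝ × ℝ => qx * z.1 + qy * z.2) p (volume.restrict (cQ w h)) =
      ENNReal.ofReal ((2 * (|(qx * w + qy * h)/2| ^ (p.toReal + 2)
          - |(qx * w - qy * h)/2| ^ (p.toReal + 2)) /
        (qx * qy * (p.toReal + 1) * (p.toReal + 2))) ^ (1 / p.toReal)) := by
  have hpr : 1 ≤ p.toReal := toReal_one_le hp1 hpt
  have hp0 : p ≠ 0 := by
    intro h0; rw [h0] at hp1; simp at hp1
  set pr := p.toReal with hprdef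
  rw [eLpNorm_eq_lintegral_rpow_enorm_toReal hp0 hpt]; simp only [enorm_eq_nnnorm]
  have hint : IntegrableOn (fun z : ℝ × ℝ => |qx * z.1 + qy * z.2| ^ pr) (cQ w h) volume :=
    (cont_integrand hpr qx qy).continuousOn.integrableOn_compact
      (isCompact_Icc.prod isCompact_Icc)
  have hIeq : ∫ z in cQ w h, |qx * z.1 + qy * z.2| ^ pr =
      2 * (|(qx * w + qy * h)/2| ^ (pr + 2) - |(qx * w - qy * h)/2| ^ (pr + 2)) /
        (qx * qy * (pr + 1) * (pr + 2)) := by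
    rw [cQ]; exact double_integral hpr hqx hqy hw hh
  have hV : (0:ℝ) ≤ 2 * (|(qx * w + qy * h)/2| ^ (pr + 2) - |(qx * w - qy * h)/2| ^ (pr + 2)) /
      (qx * qy * (pr + 1) * (pr + 2)) := by
    rw [← hIeq]
    exact integral_nonneg fun z => Real.rpow_nonneg (abs_nonneg _) _
  have hlint : ∫⁻ z, (‖qx * z.1 + qy * z.2‖₊ : ℝ≥0∞) ^ pr ∂(volume.restrict (cQ w h)) =
      ENNReal.ofReal (∫ z in cQ w h, |qx * z.1 + qy * z.2| ^ pr) := by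
    rw [ofReal_integral_eq_lintegral_ofReal hint
      (Filter.Eventually.of_forall fun z => Real.rpow_nonneg (abs_nonneg _) _)]
    apply lintegral_congr
    intro z
    rw [← enorm_eq_nnnorm, Real.enorm_eq_ofReal_abs, ENNReal.ofReal_rpow_of_nonneg (abs_nonneg _) (by linarith)]
  rw [hlint, hIeq, ← ENNReal.ofReal_rpow_of_nonneg hV (by positivity)]

lemma volume_rect {a b w h : ℝ} (hw : 0 ≤ w) (hh : 0 ≤ h) :
    volume (rect a b w h) = ENNReal.ofReal w * ENNReal.ofReal h := by
  rw [rect, show (volume : Measure (ℝ × ℝ)) = (volume : Measure ℝ).prod volume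
    from Measure.volume_eq_prod ℝ ℝ, Measure.prod_prod, Real.volume_Icc, Real.volume_Icc]
  congr 1 <;> ring_nf

lemma constErr_le_bound (p : ℝ≥0∞) (qx qy a b w h : ℝ) (hw : 0 < w) (hh : 0 < h)
    (hwh : w * h = 1) :
    constErr p (fun z => qx * z.1 + qy * z.2) (rect a b w h) ≤
      ENNReal.ofReal ((|qx| * w + |qy| * h) / 2) := by
  set c₀ : ℝ := qx * (a + w/2) + qy * (b + h/2)
  refine le_trans (iInf_le _ c₀) ?_
  have hb : ∀ᵐ z ∂(volume.restrict (rect a b w h)),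
      ‖qx * z.1 + qy * z.2 - c₀‖ ≤ (|qx| * w + |qy| * h) / 2 := by
    rw [ae_restrict_iff' (measurableSet_rect a b w h)]
    filter_upwards with z hz
    obtain ⟨⟨h1, h2⟩, h3, h4⟩ := hz
    rw [Real.norm_eq_abs]
    have e : qx * z.1 + qy * z.2 - c₀ = qx * (z.1 - (a + w/2)) + qy * (z.2 - (b + h/2)) := by
      simp only [c₀]; ring
    rw [e]
    calc |qx * (z.1 - (a + w/2)) + qy * (z.2 - (b + h/2))|
        ≤ |qx * (z.1 - (a + w/2))| + |qy * (z.2 - (b + h/2))| := abs_add_le _ _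
      _ = |qx| * |z.1 - (a + w/2)| + |qy| * |z.2 - (b + h/2)| := by rw [abs_mul, abs_mul]
      _ ≤ |qx| * (w/2) + |qy| * (h/2) := by
          gcongr
          · rw [abs_le]; constructor <;> linarith
          · rw [abs_le]; constructor <;> linarith
      _ = (|qx| * w + |qy| * h) / 2 := by ring
  refine le_trans (eLpNorm_le_of_ae_bound hb) ?_
  rw [Measure.restrict_apply_univ, volume_rect hw.le hh.le, ← ENNReal.ofReal_mul hw.le, hwh]
  simp

/-! ### value for `p = ∞` -/

lemma eLpNorm_top_cQ {qx qy w h : ℝ} (hqx : qx ≠ 0) (hqy : qy ≠ 0) (hw : 0 < w) (hh : 0 < h) :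
    eLpNorm (fun z : ℝ × ℝ => qx * z.1 + qy * z.2) ⊤ (volume.restrict (cQ w h)) =
      ENNReal.ofReal ((|qx| * w + |qy| * h) / 2) := by
  set S : ℝ := (|qx| * w + |qy| * h) / 2 with hS
  have hSpos : 0 < S := by
    have h1 : 0 < |qx| := abs_pos.2 hqx
    have h2 : 0 < |qy| := abs_pos.2 hqy
    rw [hS]; positivity
  set μ := volume.restrict (cQ w h) with hμ
  rw [eLpNorm_exponent_top]
  apply le_antisymm
  · apply eLpNormEssSup_le_of_ae_bound (C := S)
    rw [hμ, ae_restrict_iff' (measurableSet_cQ w h)]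
    filter_upwards with z hz
    obtain ⟨⟨h1, h2⟩, h3, h4⟩ := hz
    rw [Real.norm_eq_abs]
    calc |qx * z.1 + qy * z.2| ≤ |qx * z.1| + |qy * z.2| := abs_add_le _ _
      _ = |qx| * |z.1| + |qy| * |z.2| := by rw [abs_mul, abs_mul]
      _ ≤ |qx| * (w/2) + |qy| * (h/2) := by
          gcongr
          · rw [abs_le]; exact ⟨by linarith, h2⟩
          · rw [abs_le]; exact ⟨by linarith, h4⟩
      _ = S := by rw [hS]; ring
  · by_contra hcon
    push_neg at hcon
    set L := eLpNormEssSup (fun z : ℝ × ℝ => qx * z.1 + qy * z.2) μ with hL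
    have hLtop : L ≠ ⊤ := ne_top_of_lt (lt_of_lt_of_le hcon le_top)
    have hLS : L.toReal < S := by
      have := ENNReal.toReal_strict_mono (by simp : ENNReal.ofReal S ≠ ⊤) hcon
      rwa [ENNReal.toReal_ofReal hSpos.le] at this
    set ex : ℝ := if 0 < qx then w/2 else -(w/2) with hex
    set ey : ℝ := if 0 < qy then h/2 else -(h/2) with hey
    have hfx : qx * ex = |qx| * (w/2) := by
      rw [hex]; rcases lt_trichotomy qx 0 with hq | hq | hq
      · rw [if_neg (by linarith), abs_of_neg hq]; ring
      · exact absurd hq hqx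
      · rw [if_pos hq, abs_of_pos hq]
    have hfy : qy * ey = |qy| * (h/2) := by
      rw [hey]; rcases lt_trichotomy qy 0 with hq | hq | hq
      · rw [if_neg (by linarith), abs_of_neg hq]; ring
      · exact absurd hq hqy
      · rw [if_pos hq, abs_of_pos hq]
    have habs_ex : |ex| = w/2 := by
      rw [hex]; split_ifs <;> simp [abs_of_pos, abs_of_neg, hw.le] <;> linarith
    have habs_ey : |ey| = h/2 := by
      rw [hey]; split_ifs <;> simp [abs_of_pos, abs_of_neg, hh.le] <;> linarith
    set t : ℝ := min (1/2) ((S - L.toReal) / (2 * S)) with ht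
    have htpos : 0 < t := by
      apply lt_min (by norm_num)
      apply div_pos (by linarith) (by linarith)
    have ht1 : t < 1 := lt_of_le_of_lt (min_le_left _ _) (by norm_num)
    have hcorner : qx * ((1 - t) * ex) + qy * ((1 - t) * ey) = (1 - t) * S := by
      rw [hS]; nlinarith [hfx, hfy]
    have hgt : L.toReal < (1 - t) * S := by
      have hts : t * S ≤ ((S - L.toReal) / (2 * S)) * S := by
        apply mul_le_mul_of_nonneg_right (min_le_right _ _) hSpos.le
      have : ((S - L.toReal) / (2 * S)) * S = (S - L.toReal) / 2 := by
        field_simp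
      nlinarith
    set U : Set (ℝ × ℝ) := {z | L.toReal < qx * z.1 + qy * z.2} ∩
      (Ioo (-(w/2)) (w/2) ×ˢ Ioo (-(h/2)) (h/2)) with hU
    have hUopen : IsOpen U :=
      ((isOpen_lt continuous_const (cont_lin qx qy))).inter ((isOpen_Ioo).prod isOpen_Ioo)
    have hUne : U.Nonempty := by
      refine ⟨((1 - t) * ex, (1 - t) * ey), ?_, ?_⟩
      · simpa [hcorner] using hgt
      · constructor
        · simp only [Set.mem_Ioo]
          constructor
          · nlinarith [abs_le.1 (le_of_eq habs_ex), neg_abs_le ex, habs_ex]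
          · nlinarith [le_abs_self ex, habs_ex]
        · simp only [Set.mem_Ioo]
          constructor
          · nlinarith [neg_abs_le ey, habs_ey]
          · nlinarith [le_abs_self ey, habs_ey]
    have hUsub : U ⊆ cQ w h := by
      rintro z ⟨_, ⟨hz1, hz2⟩⟩
      exact ⟨⟨(hz1.1).le, (hz1.2).le⟩, ⟨(hz2.1).le, (hz2.2).le⟩⟩
    have hUpos : 0 < μ U := by
      rw [hμ, Measure.restrict_apply hUopen.measurableSet]
      rw [Set.inter_eq_self_of_subset_left hUsub]
      exact hUopen.measure_pos volume hUne
    have hae : ∀ᵐ z ∂μ, ‖qx * z.1 + qy * z.2‖₊ ≤ L.toNNReal := by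
      have := ae_le_eLpNormEssSup (f := fun z : ℝ × ℝ => qx * z.1 + qy * z.2) (μ := μ)
      filter_upwards [this] with z hz
      rw [← ENNReal.coe_le_coe, ENNReal.coe_toNNReal hLtop]
      exact hz
    have : μ U = 0 := by
      have hsub2 : U ⊆ {z : ℝ × ℝ | ¬ (‖qx * z.1 + qy * z.2‖₊ ≤ L.toNNReal)} := by
        rintro z ⟨hz1, _⟩
        simp only [Set.mem_setOf_eq, not_le]
        have : L.toReal < qx * z.1 + qy * z.2 := hz1
        rw [← NNReal.coe_lt_coe]
        calc (L.toNNReal : ℝ) = L.toReal := by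
              simp [ENNReal.coe_toNNReal_eq_toReal]
          _ < qx * z.1 + qy * z.2 := this
          _ ≤ |qx * z.1 + qy * z.2| := le_abs_self _
          _ = ‖qx * z.1 + qy * z.2‖₊ := by rw [← Real.norm_eq_abs]; simp
      exact measure_mono_null hsub2 hae
    rw [this] at hUpos
    exact lt_irrefl 0 hUpos

/-! ### real arithmetic -/

lemma rpow_superadd_strict {x y z : ℝ} (hx : 0 < x) (hy : 0 < y) (hz : 1 < z) :
    x ^ z + y ^ z < (x + y) ^ z := by
  have hz1 : (0:ℝ) < z - 1 := by linarith
  have key : ∀ a : ℝ, 0 < a → a < x + y → a ^ z < a * (x + y) ^ (z - 1) := by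
    intro a ha hlt
    have h1 : a ^ z = a * a ^ (z - 1) := by
      have h := Real.rpow_add ha 1 (z - 1)
      rw [show (1:ℝ) + (z - 1) = z by ring] at h
      rw [h, Real.rpow_one]
    rw [h1]
    exact mul_lt_mul_of_pos_left (Real.rpow_lt_rpow ha.le hlt hz1) ha
  have h1 := key x hx (by linarith)
  have h2 := key y hy (by linarith)
  have h3 : (x + y) ^ z = (x + y) * (x + y) ^ (z - 1) := by
    have h := Real.rpow_add (show (0:ℝ) < x + y by linarith) 1 (z - 1)
    rw [show (1:ℝ) + (z - 1) = z by ring] at h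
    rw [h, Real.rpow_one]
  rw [h3]; nlinarith

lemma rpow_superadd {x y z : ℝ} (hx : 0 ≤ x) (hy : 0 ≤ y) (hz : 1 < z) :
    x ^ z + y ^ z ≤ (x + y) ^ z := by
  rcases eq_or_lt_of_le hx with hx0 | hx0
  · rw [← hx0, Real.zero_rpow (by linarith : z ≠ 0), zero_add, zero_add]
  rcases eq_or_lt_of_le hy with hy0 | hy0
  · rw [← hy0, Real.zero_rpow (by linarith : z ≠ 0), add_zero, add_zero]
  exact (rpow_superadd_strict hx0 hy0 hz).le

lemma rpow_sq_half {a : ℝ} (ha : 0 ≤ a) (pr : ℝ) :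
    a ^ (pr + 2) = (a ^ 2) ^ ((pr + 2) / 2) := by
  rw [← Real.rpow_two, ← Real.rpow_mul ha]
  congr 1
  ring

lemma value_normalized {pr qx qy w h : ℝ} (hpr : 1 ≤ pr) (hqx : qx ≠ 0) (hqy : qy ≠ 0)
    (hw : 0 < w) (hh : 0 < h) :
    2 * (|(qx * w + qy * h)/2| ^ (pr + 2) - |(qx * w - qy * h)/2| ^ (pr + 2)) /
      (qx * qy * (pr + 1) * (pr + 2)) =
    2 * (((|qx| * w + |qy| * h)/2) ^ (pr + 2) - |(|qx| * w - |qy| * h)/2| ^ (pr + 2)) /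
      (|qx * qy| * (pr + 1) * (pr + 2)) := by
  have hK1 : (0:ℝ) < pr + 1 := by linarith
  have hK2 : (0:ℝ) < pr + 2 := by linarith
  rcases lt_trichotomy qx 0 with hx0 | hx0 | hx0
  · rcases lt_trichotomy qy 0 with hy0 | hy0 | hy0
    · have e1 : |(qx * w + qy * h)/2| = (|qx| * w + |qy| * h)/2 := by
        rw [abs_of_neg hx0, abs_of_neg hy0, abs_of_nonpos (by nlinarith)]; ring
      have e2 : |(qx * w - qy * h)/2| = |(|qx| * w - |qy| * h)/2| := by
        rw [abs_of_neg hx0, abs_of_neg hy0, ← abs_neg]; congr 1; ring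
      have e3 : |qx * qy| = qx * qy := abs_of_pos (by nlinarith)
      rw [e1, e2, e3]
    · exact absurd hy0 hqy
    · have e1 : |(qx * w + qy * h)/2| = |(|qx| * w - |qy| * h)/2| := by
        rw [abs_of_neg hx0, abs_of_pos hy0, ← abs_neg]; congr 1; ring
      have e2 : |(qx * w - qy * h)/2| = (|qx| * w + |qy| * h)/2 := by
        rw [abs_of_neg hx0, abs_of_pos hy0, abs_of_nonpos (by nlinarith)]; ring
      have e3 : |qx * qy| = -(qx * qy) := abs_of_neg (by nlinarith)
      rw [e1, e2]
      rw [show qx * qy * (pr + 1) * (pr + 2) = -(|qx * qy| * (pr + 1) * (pr + 2)) by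
        rw [e3]; ring]
      rw [div_neg]
      ring
  · exact absurd hx0 hqx
  · rcases lt_trichotomy qy 0 with hy0 | hy0 | hy0
    · have e1 : |(qx * w + qy * h)/2| = |(|qx| * w - |qy| * h)/2| := by
        rw [abs_of_pos hx0, abs_of_neg hy0]; congr 1; ring
      have e2 : |(qx * w - qy * h)/2| = (|qx| * w + |qy| * h)/2 := by
        rw [abs_of_pos hx0, abs_of_neg hy0, abs_of_nonneg (by nlinarith)]; ring
      have e3 : |qx * qy| = -(qx * qy) := abs_of_neg (by nlinarith)
      rw [e1, e2]
      rw [show qx * qy * (pr + 1) * (pr + 2) = -(|qx * qy| * (pr + 1) * (pr + 2)) by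
        rw [e3]; ring]
      rw [div_neg]
      ring
    · exact absurd hy0 hqy
    · have e1 : |(qx * w + qy * h)/2| = (|qx| * w + |qy| * h)/2 := by
        rw [abs_of_pos hx0, abs_of_pos hy0, abs_of_nonneg (by nlinarith)]
      have e2 : |(qx * w - qy * h)/2| = |(|qx| * w - |qy| * h)/2| := by
        rw [abs_of_pos hx0, abs_of_pos hy0]
      have e3 : |qx * qy| = qx * qy := abs_of_pos (by nlinarith)
      rw [e1, e2, e3]

lemma numer_lower {pr m : ℝ} (hpr : 1 ≤ pr) {S D : ℝ} (hS : 0 ≤ S) (hD : 0 ≤ D) (hm : 0 < m)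
    (hSD : S ^ 2 = m + D ^ 2) :
    m ^ ((pr + 2)/2) + D ^ (pr + 2) ≤ S ^ (pr + 2) ∧
      (0 < D → m ^ ((pr + 2)/2) + D ^ (pr + 2) < S ^ (pr + 2)) := by
  have hz : (1:ℝ) < (pr + 2)/2 := by linarith
  have hSrw : S ^ (pr + 2) = (m + D ^ 2) ^ ((pr + 2)/2) := by
    rw [rpow_sq_half hS, hSD]
  have hDrw : D ^ (pr + 2) = (D ^ 2) ^ ((pr + 2)/2) := rpow_sq_half hD pr
  constructor
  · rw [hSrw, hDrw]
    exact rpow_superadd hm.le (sq_nonneg D) hz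
  · intro hD0
    rw [hSrw, hDrw]
    exact rpow_superadd_strict hm (by positivity) hz

lemma final_real {pr qx qy w h : ℝ} (hpr : 1 ≤ pr) (hA : 0 < qx) (hB : 0 < qy) (hw : 0 < w)
    (hh : 0 < h) (hwh : w * h = 1) :
    (0 < 2 * (((qx * w + qy * h)/2) ^ (pr + 2) - |(qx * w - qy * h)/2| ^ (pr + 2)) /
        ((qx * qy) * (pr + 1) * (pr + 2))) ∧
    ((2/((pr+1)*(pr+2)))^(1/pr) * Real.sqrt (qx * qy) ≤
      (2 * (((qx * w + qy * h)/2) ^ (pr + 2) - |(qx * w - qy * h)/2| ^ (pr + 2)) /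
        ((qx * qy) * (pr + 1) * (pr + 2))) ^ (1/pr)) ∧
    ((2 * (((qx * w + qy * h)/2) ^ (pr + 2) - |(qx * w - qy * h)/2| ^ (pr + 2)) /
        ((qx * qy) * (pr + 1) * (pr + 2))) ^ (1/pr) =
      (2/((pr+1)*(pr+2)))^(1/pr) * Real.sqrt (qx * qy) ↔ qx * w = qy * h) := by
  set m : ℝ := qx * qy with hm
  have hm0 : 0 < m := mul_pos hA hB
  set S : ℝ := (qx * w + qy * h)/2 with hSdef
  set D : ℝ := |(qx * w - qy * h)/2| with hDdef
  have hS0 : 0 ≤ S := by positivity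
  have hD0 : 0 ≤ D := abs_nonneg _
  have hSD : S ^ 2 = m + D ^ 2 := by
    rw [hDdef, sq_abs, hSdef, hm]
    nlinarith [hwh]
  have hK0 : (0:ℝ) < (pr + 1) * (pr + 2) := by nlinarith
  obtain ⟨hle, hlt⟩ := numer_lower hpr hS0 hD0 hm0 hSD
  have hmz : (0:ℝ) < m ^ ((pr+2)/2) := Real.rpow_pos_of_pos hm0 _
  have hDz : (0:ℝ) ≤ D ^ (pr + 2) := Real.rpow_nonneg hD0 _
  have hbase : (2/((pr+1)*(pr+2))) * m ^ (pr/2) =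
      2 * m ^ ((pr+2)/2) / (m * (pr + 1) * (pr + 2)) := by
    have hsplit : m ^ ((pr+2)/2) = m ^ (pr/2) * m := by
      have := Real.rpow_add hm0 (pr/2) 1
      rw [show pr/2 + 1 = (pr+2)/2 by ring] at this
      rw [this, Real.rpow_one]
    rw [hsplit]
    field_simp
  have hVle : (2/((pr+1)*(pr+2))) * m ^ (pr/2) ≤
      2 * (S ^ (pr + 2) - D ^ (pr + 2)) / (m * (pr + 1) * (pr + 2)) := by
    rw [hbase]
    apply div_le_div_of_nonneg_right ?_ (by positivity)
    · nlinarith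
  have hVpos : 0 < 2 * (S ^ (pr + 2) - D ^ (pr + 2)) / (m * (pr + 1) * (pr + 2)) :=
    lt_of_lt_of_le (by positivity) hVle
  have hbase_rpow : ((2/((pr+1)*(pr+2))) * m ^ (pr/2)) ^ (1/pr) =
      (2/((pr+1)*(pr+2)))^(1/pr) * Real.sqrt m := by
    rw [Real.mul_rpow (by positivity) (Real.rpow_nonneg hm0.le _),
      ← Real.rpow_mul hm0.le, show pr/2 * (1/pr) = 1/2 by field_simp,
      Real.sqrt_eq_rpow]
  have hprpos : (0:ℝ) < 1/pr := by positivity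
  refine ⟨?_, ?_, ?_⟩
  · exact hVpos
  · calc (2/((pr+1)*(pr+2)))^(1/pr) * Real.sqrt m
        = ((2/((pr+1)*(pr+2))) * m ^ (pr/2)) ^ (1/pr) := hbase_rpow.symm
      _ ≤ _ := Real.rpow_le_rpow (by positivity) hVle hprpos.le
  · constructor
    · intro heq
      by_contra hne
      have hDpos : 0 < D := by
        rw [hDdef]
        apply abs_pos.2
        intro h0
        apply hne
        have : qx * w - qy * h = 0 := by linarith [h0]
        linarith
      have hstrict : (2/((pr+1)*(pr+2))) * m ^ (pr/2) <
          2 * (S ^ (pr + 2) - D ^ (pr + 2)) / (m * (pr + 1) * (pr + 2)) := by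
        rw [hbase, div_lt_div_iff₀ (by positivity) (by positivity)]
        have hd : (0:ℝ) < m * (pr + 1) * (pr + 2) := by positivity
        nlinarith [mul_pos (sub_pos.2 (hlt hDpos)) hd]
      have := Real.rpow_lt_rpow (by positivity) hstrict hprpos
      rw [hbase_rpow] at this
      exact absurd heq (ne_of_gt this)
    · intro heq
      have hDzero : D = 0 := by
        rw [hDdef, abs_eq_zero]
        linarith
      rw [hDzero, Real.zero_rpow (by linarith : pr + 2 ≠ 0), sub_zero]
      have hSm : S ^ (pr + 2) = m ^ ((pr+2)/2) := by
        rw [rpow_sq_half hS0, hSD, hDzero]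
        norm_num
      rw [hSm, ← hbase_rpow, hbase]

lemma amgm_sharp {A B : ℝ} (hA : 0 < A) (hB : 0 < B) :
    Real.sqrt (A * B) ≤ (A + B)/2 ∧ ((A + B)/2 = Real.sqrt (A * B) ↔ A = B) := by
  have hsA := Real.sq_sqrt hA.le
  have hsB := Real.sq_sqrt hB.le
  have hsqA : (0:ℝ) ≤ Real.sqrt A := Real.sqrt_nonneg A
  have hsqB : (0:ℝ) ≤ Real.sqrt B := Real.sqrt_nonneg B
  have hmul : Real.sqrt (A * B) = Real.sqrt A * Real.sqrt B := Real.sqrt_mul hA.le B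
  constructor
  · rw [hmul]; nlinarith [sq_nonneg (Real.sqrt A - Real.sqrt B)]
  · constructor
    · intro heq
      rw [hmul] at heq
      have hzero : (Real.sqrt A - Real.sqrt B) ^ 2 = 0 := by nlinarith
      have : Real.sqrt A = Real.sqrt B := by nlinarith [hzero]
      nlinarith [this]
    · intro heq
      subst heq
      rw [show A * A = A ^ 2 by ring, Real.sqrt_sq hA.le]
      ring

lemma ratio_iff {qx qy w h : ℝ} (hqx : 0 < qx) (hqy : 0 < qy) (hw : 0 < w) (hh : 0 < h) :
    w / h = qy / qx ↔ qx * w = qy * h := by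
  rw [div_eq_div_iff hh.ne' hqx.ne']
  constructor <;> intro e <;> linarith

lemma opt_rect {qx qy : ℝ} (hqx : 0 < qx) (hqy : 0 < qy) :
    0 < Real.sqrt (qy / qx) ∧ 0 < Real.sqrt (qx / qy) ∧
      Real.sqrt (qy / qx) * Real.sqrt (qx / qy) = 1 ∧
      qx * Real.sqrt (qy / qx) = qy * Real.sqrt (qx / qy) := by
  have h1 : (0:ℝ) < qy / qx := div_pos hqy hqx
  have h2 : (0:ℝ) < qx / qy := div_pos hqx hqy
  refine ⟨Real.sqrt_pos.2 h1, Real.sqrt_pos.2 h2, ?_, ?_⟩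
  · rw [← Real.sqrt_mul h1.le, show qy / qx * (qx / qy) = 1 by field_simp, Real.sqrt_one]
  · have e1 : qx * Real.sqrt (qy / qx) = Real.sqrt (qx * qy) := by
      rw [show qx * Real.sqrt (qy / qx) = Real.sqrt (qx ^ 2) * Real.sqrt (qy / qx) by
        rw [Real.sqrt_sq hqx.le], ← Real.sqrt_mul (by positivity)]
      congr 1
      field_simp
    have e2 : qy * Real.sqrt (qx / qy) = Real.sqrt (qx * qy) := by
      rw [show qy * Real.sqrt (qx / qy) = Real.sqrt (qy ^ 2) * Real.sqrt (qx / qy) by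
        rw [Real.sqrt_sq hqy.le], ← Real.sqrt_mul (by positivity)]
      congr 1
      field_simp
    rw [e1, e2]

/-! ### constErr values -/

lemma constErr_val_finite {p : ℝ≥0∞} {qx qy a b w h : ℝ} (hp1 : 1 ≤ p) (hpt : p ≠ ⊤)
    (hqx : qx ≠ 0) (hqy : qy ≠ 0) (hw : 0 < w) (hh : 0 < h) :
    constErr p (fun z => qx * z.1 + qy * z.2) (rect a b w h) =
      ENNReal.ofReal ((2 * (((|qx| * w + |qy| * h)/2) ^ (p.toReal + 2)
          - |(|qx| * w - |qy| * h)/2| ^ (p.toReal + 2)) /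
        ((|qx| * |qy|) * (p.toReal + 1) * (p.toReal + 2))) ^ (1 / p.toReal)) := by
  rw [constErr_eq_centered, iInf_centered hp1, eLpNorm_cQ hp1 hpt hqx hqy hw hh]
  congr 2
  rw [value_normalized (toReal_one_le hp1 hpt) hqx hqy hw hh, abs_mul]

lemma constErr_val_top {qx qy a b w h : ℝ} (hqx : qx ≠ 0) (hqy : qy ≠ 0) (hw : 0 < w)
    (hh : 0 < h) :
    constErr ⊤ (fun z => qx * z.1 + qy * z.2) (rect a b w h) =
      ENNReal.ofReal ((|qx| * w + |qy| * h) / 2) := by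
  rw [constErr_eq_centered, iInf_centered le_top, eLpNorm_top_cQ hqx hqy hw hh]

/-! ### shapeK values -/

lemma shapeK_finite {p : ℝ≥0∞} {qx qy : ℝ} (hp1 : 1 ≤ p) (hpt : p ≠ ⊤) (hqx : qx ≠ 0)
    (hqy : qy ≠ 0) :
    shapeK p qx qy = ENNReal.ofReal
      ((2 / ((p.toReal + 1) * (p.toReal + 2))) ^ (1 / p.toReal) * Real.sqrt |qx * qy|) := by
  have hax : 0 < |qx| := abs_pos.2 hqx
  have hay : 0 < |qy| := abs_pos.2 hqy
  have hpr : 1 ≤ p.toReal := toReal_one_le hp1 hpt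
  obtain ⟨hw0, hh0, hwh0, heq0⟩ := opt_rect hax hay
  have habs : Real.sqrt |qx * qy| = Real.sqrt (|qx| * |qy|) := by rw [abs_mul]
  apply le_antisymm
  · apply sInf_le
    refine ⟨0, 0, _, _, hw0, hh0, hwh0, ?_⟩
    rw [constErr_val_finite hp1 hpt hqx hqy hw0 hh0]
    rw [habs]
    congr 1
    exact ((final_real hpr hax hay hw0 hh0 hwh0).2.2.mpr heq0).symm
  · apply le_sInf
    rintro e ⟨a, b, w, h, hw, hh, hwh, rfl⟩
    rw [constErr_val_finite hp1 hpt hqx hqy hw hh]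
    apply ENNReal.ofReal_le_ofReal
    rw [habs]
    exact (final_real hpr hax hay hw hh hwh).2.1

lemma shapeK_top {qx qy : ℝ} (hqx : qx ≠ 0) (hqy : qy ≠ 0) :
    shapeK ⊤ qx qy = ENNReal.ofReal (Real.sqrt |qx * qy|) := by
  have hax : 0 < |qx| := abs_pos.2 hqx
  have hay : 0 < |qy| := abs_pos.2 hqy
  obtain ⟨hw0, hh0, hwh0, heq0⟩ := opt_rect hax hay
  have habs : Real.sqrt |qx * qy| = Real.sqrt (|qx| * |qy|) := by rw [abs_mul]
  apply le_antisymm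
  · apply sInf_le
    refine ⟨0, 0, _, _, hw0, hh0, hwh0, ?_⟩
    rw [constErr_val_top hqx hqy hw0 hh0]
    have hAB : |qx| * Real.sqrt (|qy| / |qx|) * (|qy| * Real.sqrt (|qx| / |qy|)) =
        |qx| * |qy| := by
      linear_combination (|qx| * |qy|) * hwh0
    have hA : 0 < |qx| * Real.sqrt (|qy| / |qx|) := by positivity
    have hB : 0 < |qy| * Real.sqrt (|qx| / |qy|) := by positivity
    rw [habs]
    congr 1
    have := (amgm_sharp hA hB).2.mpr heq0
    rw [hAB] at this
    exact this.symm
  · apply le_sInf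
    rintro e ⟨a, b, w, h, hw, hh, hwh, rfl⟩
    rw [constErr_val_top hqx hqy hw hh]
    apply ENNReal.ofReal_le_ofReal
    rw [habs]
    have hA : 0 < |qx| * w := by positivity
    have hB : 0 < |qy| * h := by positivity
    have hAB : |qx| * w * (|qy| * h) = |qx| * |qy| := by
      linear_combination (|qx| * |qy|) * hwh
    have := (amgm_sharp hA hB).1
    rw [hAB] at this
    exact this

lemma shapeK_deg {qx qy : ℝ} (p : ℝ≥0∞) (hqxy : qx * qy = 0) : shapeK p qx qy = 0 := by
  refine le_antisymm ?_ zero_le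
  refine ENNReal.le_of_forall_pos_le_add fun ε hε _ => ?_
  rw [zero_add]
  have hεr : (0:ℝ) < (ε:ℝ) := hε
  rcases mul_eq_zero.1 hqxy with h0 | h0
  · -- qx = 0
    set hh : ℝ := (ε:ℝ)/(|qy| + 1) with hhdef
    set ww : ℝ := (|qy| + 1)/(ε:ℝ) with hwdef
    have hhpos : 0 < hh := by positivity
    have hwpos : 0 < ww := by positivity
    have hwh : ww * hh = 1 := by
      rw [hhdef, hwdef]; field_simp
    refine le_trans (sInf_le ⟨0, 0, ww, hh, hwpos, hhpos, hwh, rfl⟩) ?_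
    refine le_trans (constErr_le_bound p qx qy 0 0 ww hh hwpos hhpos hwh) ?_
    rw [← ENNReal.ofReal_coe_nnreal]
    apply ENNReal.ofReal_le_ofReal
    rw [h0, abs_zero, zero_mul, zero_add, hhdef]
    have hq1 : (0:ℝ) < |qy| + 1 := by positivity
    have : |qy| * ((ε:ℝ)/(|qy| + 1)) ≤ (ε:ℝ) := by
      rw [mul_div_assoc', div_le_iff₀ hq1]
      nlinarith [abs_nonneg qy]
    linarith
  · -- qy = 0
    set ww : ℝ := (ε:ℝ)/(|qx| + 1) with hwdef
    set hh : ℝ := (|qx| + 1)/(ε:ℝ) with hhdef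
    have hhpos : 0 < hh := by positivity
    have hwpos : 0 < ww := by positivity
    have hwh : ww * hh = 1 := by
      rw [hhdef, hwdef]; field_simp
    refine le_trans (sInf_le ⟨0, 0, ww, hh, hwpos, hhpos, hwh, rfl⟩) ?_
    refine le_trans (constErr_le_bound p qx qy 0 0 ww hh hwpos hhpos hwh) ?_
    rw [← ENNReal.ofReal_coe_nnreal]
    apply ENNReal.ofReal_le_ofReal
    rw [h0, abs_zero, zero_mul, add_zero, hwdef]
    have hq1 : (0:ℝ) < |qx| + 1 := by positivity
    have : |qx| * ((ε:ℝ)/(|qx| + 1)) ≤ (ε:ℝ) := by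
      rw [mul_div_assoc', div_le_iff₀ hq1]
      nlinarith [abs_nonneg qx]
    linarith

lemma top_const : (2 / (((⊤:ℝ≥0∞).toReal + 1) * ((⊤:ℝ≥0∞).toReal + 2))) ^ (1 / (⊤:ℝ≥0∞).toReal)
    = (1:ℝ) := by
  rw [ENNReal.toReal_top]
  norm_num

/-- For the linear function `𝐪(x,y) = q_x x + q_y y`, the infimum over unit-area
axis-aligned rectangles of `e_{1,T}(𝐪)_p` equals `C_p √|q_x q_y|` with
`C_p = (2/((p+1)(p+2)))^{1/p}` (`C_∞ = 1`); if `q_x q_y ≠ 0` the infimum is attained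
exactly on rectangles with aspect ratio `|I|/|J| = |q_y|/|q_x|`, independently of `p`. -/
theorem stmt13 (qx qy : ℝ) :
    (∀ p : ℝ≥0∞, 1 ≤ p →
      shapeK p qx qy = ENNReal.ofReal
        ((2 / ((p.toReal + 1) * (p.toReal + 2))) ^ (1 / p.toReal) * Real.sqrt |qx * qy|)) ∧
    shapeK ⊤ qx qy = ENNReal.ofReal (Real.sqrt |qx * qy|) ∧
    (qx * qy ≠ 0 → ∀ p : ℝ≥0∞, 1 ≤ p → ∀ a b w h : ℝ, 0 < w → 0 < h → w * h = 1 →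
      (constErr p (fun z => qx * z.1 + qy * z.2) (rect a b w h) =
          ENNReal.ofReal ((2 / ((p.toReal + 1) * (p.toReal + 2))) ^ (1 / p.toReal) *
            Real.sqrt |qx * qy|) ↔
        w / h = |qy| / |qx|)) := by
  refine ⟨?_, ?_, ?_⟩
  · intro p hp
    by_cases hqxy : qx * qy = 0
    · rw [shapeK_deg p hqxy, hqxy, abs_zero, Real.sqrt_zero, mul_zero, ENNReal.ofReal_zero]
    · have hqx : qx ≠ 0 := left_ne_zero_of_mul hqxy
      have hqy : qy ≠ 0 := right_ne_zero_of_mul hqxy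
      by_cases hpt : p = ⊤
      · subst hpt
        rw [shapeK_top hqx hqy, top_const, one_mul]
      · exact shapeK_finite hp hpt hqx hqy
  · by_cases hqxy : qx * qy = 0
    · rw [shapeK_deg ⊤ hqxy, hqxy, abs_zero, Real.sqrt_zero, ENNReal.ofReal_zero]
    · exact shapeK_top (left_ne_zero_of_mul hqxy) (right_ne_zero_of_mul hqxy)
  · intro hqxy p hp a b w h hw hh hwh
    have hqx : qx ≠ 0 := left_ne_zero_of_mul hqxy
    have hqy : qy ≠ 0 := right_ne_zero_of_mul hqxy
    have hax : 0 < |qx| := abs_pos.2 hqx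
    have hay : 0 < |qy| := abs_pos.2 hqy
    have hratio := ratio_iff hax hay hw hh
    have habs : Real.sqrt |qx * qy| = Real.sqrt (|qx| * |qy|) := by rw [abs_mul]
    by_cases hpt : p = ⊤
    · subst hpt
      rw [constErr_val_top hqx hqy hw hh, top_const, one_mul, hratio, habs]
      have hA : 0 < |qx| * w := by positivity
      have hB : 0 < |qy| * h := by positivity
      have hAB : |qx| * w * (|qy| * h) = |qx| * |qy| := by
        linear_combination (|qx| * |qy|) * hwh
      rw [ENNReal.ofReal_eq_ofReal_iff (by positivity) (Real.sqrt_nonneg _)]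
      rw [← hAB]
      exact (amgm_sharp hA hB).2
    · have hpr : 1 ≤ p.toReal := toReal_one_le hp hpt
      obtain ⟨hVpos, _, hiff⟩ := final_real hpr hax hay hw hh hwh
      rw [constErr_val_finite hp hpt hqx hqy hw hh, hratio, habs]
      rw [ENNReal.ofReal_eq_ofReal_iff (Real.rpow_nonneg hVpos.le _) (by positivity)]
      exact hiff
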